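/- Let S be a real n×m matrix such that every cycle of its SR graph G(S) is an o-cycle; that is, for all r ≥ 2 and all injective a : Fin r → Fin n and b : Fin r → Fin m with S (a j) (b j) ≠ 0 and S (a j) (b (j+1)) ≠ 0 for all j (indices mod r), one has (-1)^r · ∏_j sign(S (a j) (b j)) · sign(S (a j) (b (j+1))) = -1. Then every square submatrix of S (given by injective row and column selections) has signed determinant: it is either sign nonsingular or sign singular. -/

import Mathlib

namespace SRGraph

variable {n m : ℕ}

/-- A cycle of the SR graph `G(S)`: `r ≥ 2` together with injective maps
`a : Fin r → Fin n` (S-vertices) and `b : Fin r → Fin m` (R-vertices) such that the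
entries `S (a j) (b j)` and `S (a j) (b (j+1))` (indices mod `r`) are all nonzero. -/
def IsCyc (S : Matrix (Fin n) (Fin m) ℝ) {r : ℕ} (a : Fin r → Fin n) (b : Fin r → Fin m) :
    Prop :=
  2 ≤ r ∧ Function.Injective a ∧ Function.Injective b ∧
    (∀ j, S (a j) (b j) ≠ 0) ∧ (∀ j, S (a j) (b (finRotate r j)) ≠ 0)

/-- The parity `P(C) = (-1)^r ∏_j sign(S (a j) (b j)) · sign(S (a j) (b (j+1)))` of a
cycle; the cycle is an e-cycle if this is `1` and an o-cycle if it is `-1`. -/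
noncomputable def parity (S : Matrix (Fin n) (Fin m) ℝ) {r : ℕ}
    (a : Fin r → Fin n) (b : Fin r → Fin m) : ℝ :=
  (-1 : ℝ) ^ r *
    ∏ j : Fin r, Real.sign (S (a j) (b j)) * Real.sign (S (a j) (b (finRotate r j)))

/-- A cycle is an s-cycle when the products of the absolute values of the entries on the
two halves of its disconnecting partition agree. -/
def IsSCyc (S : Matrix (Fin n) (Fin m) ℝ) {r : ℕ} (a : Fin r → Fin n)
    (b : Fin r → Fin m) : Prop :=
  ∏ j : Fin r, |S (a j) (b j)| = ∏ j : Fin r, |S (a j) (b (finRotate r j))|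

/-- The edge set of a cycle: the `2r` pairs `(a j, b j)` and `(a j, b (j+1))`. -/
def cycEdges {r : ℕ} (a : Fin r → Fin n) (b : Fin r → Fin m) : Set (Fin n × Fin m) :=
  {e | ∃ j : Fin r, e = (a j, b j) ∨ e = (a j, b (finRotate r j))}

/-- The vertex set of a cycle inside `Fin n ⊕ Fin m`. -/
def cycVerts {r : ℕ} (a : Fin r → Fin n) (b : Fin r → Fin m) : Set (Fin n ⊕ Fin m) :=
  Set.range (Sum.inl ∘ a) ∪ Set.range (Sum.inr ∘ b)

/-- Adjacency relation on `Fin n ⊕ Fin m` determined by a set `E` of (S,R) edges. -/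
def adjOf (E : Set (Fin n × Fin m)) : (Fin n ⊕ Fin m) → (Fin n ⊕ Fin m) → Prop
  | Sum.inl i, Sum.inr j => (i, j) ∈ E
  | Sum.inr j, Sum.inl i => (i, j) ∈ E
  | _, _ => False

/-- The connected component of `v` in the subgraph with vertex set `V` and edge set `E`. -/
def componentOf (E : Set (Fin n × Fin m)) (V : Set (Fin n ⊕ Fin m))
    (v : Fin n ⊕ Fin m) : Set (Fin n ⊕ Fin m) :=
  {x ∈ V | Relation.ReflTransGen (adjOf E) v x}

/-- Vertex set of an S-to-R path `u 0 – w 0 – u 1 – ⋯ – u p – w p`. -/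
def pathVerts {p : ℕ} (u : Fin (p + 1) → Fin n) (w : Fin (p + 1) → Fin m) :
    Set (Fin n ⊕ Fin m) :=
  Set.range (Sum.inl ∘ u) ∪ Set.range (Sum.inr ∘ w)

/-- Edge set (the `2p+1` pairs `(u i, w i)` and `(u (i+1), w i)`) of an S-to-R path. -/
def pathEdges {p : ℕ} (u : Fin (p + 1) → Fin n) (w : Fin (p + 1) → Fin m) :
    Set (Fin n × Fin m) :=
  {e | ∃ i : Fin (p + 1), e = (u i, w i)} ∪ {e | ∃ i : Fin p, e = (u i.succ, w i.castSucc)}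

/-- The subgraph with (nonempty) vertex set `V` and edge set `E` has all of its connected
components equal to paths joining an S-vertex to an R-vertex. -/
def SRIntersection (V : Set (Fin n ⊕ Fin m)) (E : Set (Fin n × Fin m)) : Prop :=
  V.Nonempty ∧
    ∀ v ∈ V, ∃ (p : ℕ) (u : Fin (p + 1) → Fin n) (w : Fin (p + 1) → Fin m),
      Function.Injective u ∧ Function.Injective w ∧
      pathVerts u w = componentOf E V v ∧
      pathEdges u w = {e ∈ E | Sum.inl e.1 ∈ componentOf E V v}

/-- `G(S)` contains two e-cycles, with distinct edge sets, having S-to-R intersection. -/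
def TwoECyclesWithSRIntersection (S : Matrix (Fin n) (Fin m) ℝ) : Prop :=
  ∃ (r₁ : ℕ) (a₁ : Fin r₁ → Fin n) (b₁ : Fin r₁ → Fin m)
    (r₂ : ℕ) (a₂ : Fin r₂ → Fin n) (b₂ : Fin r₂ → Fin m),
    IsCyc S a₁ b₁ ∧ parity S a₁ b₁ = 1 ∧ IsCyc S a₂ b₂ ∧ parity S a₂ b₂ = 1 ∧
    cycEdges a₁ b₁ ≠ cycEdges a₂ b₂ ∧
    SRIntersection (cycVerts a₁ b₁ ∩ cycVerts a₂ b₂) (cycEdges a₁ b₁ ∩ cycEdges a₂ b₂)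

/-- Condition (*): all e-cycles are s-cycles, and no two e-cycles (with distinct edge
sets) have S-to-R intersection. -/
def ConditionStar (S : Matrix (Fin n) (Fin m) ℝ) : Prop :=
  (∀ (r : ℕ) (a : Fin r → Fin n) (b : Fin r → Fin m),
      IsCyc S a b → parity S a b = 1 → IsSCyc S a b) ∧
  ¬ TwoECyclesWithSRIntersection S

/-- Two real matrices have the same sign pattern. -/
def SameSignPattern {k l : ℕ} (B M : Matrix (Fin k) (Fin l) ℝ) : Prop :=
  ∀ i j, Real.sign (B i j) = Real.sign (M i j)

/-- A square real matrix is sign nonsingular if every matrix with the same sign pattern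
has nonzero determinant. -/
def SignNonsingular {k : ℕ} (M : Matrix (Fin k) (Fin k) ℝ) : Prop :=
  ∀ B : Matrix (Fin k) (Fin k) ℝ, SameSignPattern B M → B.det ≠ 0

/-- A square real matrix is sign singular if every matrix with the same sign pattern has
zero determinant. -/
def SignSingular {k : ℕ} (M : Matrix (Fin k) (Fin k) ℝ) : Prop :=
  ∀ B : Matrix (Fin k) (Fin k) ℝ, SameSignPattern B M → B.det = 0

/-- `S` is strongly sign determined: every square submatrix of `S` is sign nonsingular or
has determinant zero. -/
def SSD (S : Matrix (Fin n) (Fin m) ℝ) : Prop :=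
  ∀ (k : ℕ) (ρ : Fin k → Fin n) (c : Fin k → Fin m),
    Function.Injective ρ → Function.Injective c →
    SignNonsingular (S.submatrix ρ c) ∨ (S.submatrix ρ c).det = 0

end SRGraph

namespace OCycAux

lemma sign_sq {x : ℝ} (hx : x ≠ 0) : Real.sign x * Real.sign x = 1 := by
  rcases Real.sign_apply_eq_of_ne_zero x hx with h | h <;> rw [h] <;> norm_num

lemma finRotate_val {r : ℕ} (j : Fin r) : ((finRotate r j : Fin r) : ℕ) = ((j : ℕ) + 1) % r := by
  cases r with
  | zero => exact j.elim0
  | succ n =>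
    rw [finRotate_succ_apply, Fin.add_def]
    simp [Fin.val_one', Nat.add_mod, Nat.mod_eq_of_lt j.isLt]

lemma finRotate_ne {r : ℕ} (hr : 2 ≤ r) (j : Fin r) : finRotate r j ≠ j := by
  intro hfix
  have hv : ((j : ℕ) + 1) % r = (j : ℕ) := by rw [← finRotate_val j, hfix]
  have hlt := j.isLt
  rcases lt_or_eq_of_le (Nat.succ_le_of_lt hlt) with h1 | h1
  · rw [Nat.mod_eq_of_lt h1] at hv; omega
  · have h2 : (j:ℕ)+1 = r := h1
    rw [h2, Nat.mod_self] at hv; omega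

end OCycAux

namespace OCycAux

open Equiv Function

lemma lemB {k : ℕ} :
    ∀ (N : ℕ) (δ : Equiv.Perm (Fin k)) (g : Fin k → Fin k → ℝ),
      δ.support.card ≤ N →
      (∀ i, g i i = 1) →
      (∀ (r : ℕ) (x : Fin r → Fin k), 2 ≤ r → Function.Injective x →
        (∀ j, x (finRotate r j) = δ (x j)) →
        ∏ j, g (x j) (x (finRotate r j)) = (-1 : ℝ) ^ (r + 1)) →
      ∏ i, g i (δ i) = ((Equiv.Perm.sign δ : ℤ) : ℝ) := by
  intro N
  induction N with
  | zero =>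
    intro δ g hcard h1 _h2
    have hδ : δ = 1 := by
      rw [← Equiv.Perm.support_eq_empty_iff]
      exact Finset.card_eq_zero.mp (Nat.le_zero.mp hcard)
    subst hδ
    simp [h1]
  | succ N IH =>
    intro δ g hcard h1 h2
    by_cases hδ1 : δ = 1
    · subst hδ1; simp [h1]
    obtain ⟨i, hi⟩ : ∃ i, δ i ≠ i := by
      by_contra hno
      push_neg at hno
      exact hδ1 (Equiv.ext hno)
    -- minimal period of i
    have hper : i ∈ periodicPts ⇑δ := by
      refine mk_mem_periodicPts (orderOf_pos δ) ?_
      show (⇑δ)^[orderOf δ] i = i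
      rw [← Equiv.Perm.coe_pow, pow_orderOf_eq_one]; rfl
    set r := Function.minimalPeriod ⇑δ i with hrdef
    have hr0 : 0 < r := Function.minimalPeriod_pos_of_mem_periodicPts hper
    have hr1 : r ≠ 1 := fun h =>
      hi (Function.minimalPeriod_eq_one_iff_isFixedPt.mp h)
    have hr2 : 2 ≤ r := by omega
    -- the cycle through i
    set x : Fin r → Fin k := fun j => (⇑δ)^[(j : ℕ)] i with hxdef
    have hxinj : Function.Injective x := by
      intro a b hab
      have := Function.iterate_injOn_Iio_minimalPeriod (f := ⇑δ) (x := i)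
        (Set.mem_Iio.mpr a.isLt) (Set.mem_Iio.mpr b.isLt) hab
      exact Fin.ext this
    have hxrot : ∀ j, x (finRotate r j) = δ (x j) := by
      intro j
      have hv : ((finRotate r j : Fin r) : ℕ) = ((j : ℕ) + 1) % r := finRotate_val j
      have hsucc : (⇑δ)^[(j : ℕ) + 1] i = δ ((⇑δ)^[(j : ℕ)] i) :=
        Function.iterate_succ_apply' (⇑δ) (j : ℕ) i
      show (⇑δ)^[((finRotate r j : Fin r) : ℕ)] i = δ ((⇑δ)^[(j : ℕ)] i)
      rw [hv, ← hsucc]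
      rcases lt_or_eq_of_le (Nat.succ_le_of_lt j.isLt) with hlt | heq
      · rw [Nat.mod_eq_of_lt hlt]
      · have h2' : (j : ℕ) + 1 = r := heq
        rw [h2', Nat.mod_self]
        simp only [Function.iterate_zero_apply]
        exact (Function.iterate_minimalPeriod (f := ⇑δ) (x := i)).symm
    -- support of the cycle of i
    set C : Finset (Fin k) := (δ.cycleOf i).support with hCdef
    have hiS : i ∈ δ.support := Equiv.Perm.mem_support.mpr hi
    have hmemC : ∀ y, y ∈ C ↔ δ.SameCycle i y := by
      intro y
      rw [hCdef, Equiv.Perm.mem_support_cycleOf_iff]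
      exact ⟨fun h => h.1, fun h => ⟨h, hiS⟩⟩
    have hxmem : ∀ j, x j ∈ C := by
      intro j
      rw [hmemC]
      exact ⟨(j : ℕ), by rw [zpow_natCast]; rfl⟩
    have hC : C = Finset.image x Finset.univ := by
      ext y
      constructor
      · intro hy
        obtain ⟨nn, -, -, hn⟩ := Equiv.Perm.SameCycle.exists_pow_eq δ ((hmemC y).mp hy)
        refine Finset.mem_image.mpr ⟨⟨nn % r, Nat.mod_lt _ hr0⟩, Finset.mem_univ _, ?_⟩
        show (⇑δ)^[nn % r] i = y
        rw [hrdef, Function.iterate_mod_minimalPeriod_eq]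
        rw [← hn, Equiv.Perm.coe_pow]
      · intro hy
        obtain ⟨j, -, rfl⟩ := Finset.mem_image.mp hy
        exact hxmem j
    have hcardC : C.card = r := by
      rw [hC, Finset.card_image_of_injective _ hxinj, Finset.card_univ, Fintype.card_fin]
    have hcyc : (δ.cycleOf i).IsCycle := Equiv.Perm.isCycle_cycleOf δ hi
    -- the remainder permutation
    set δ' : Equiv.Perm (Fin k) := (δ.cycleOf i)⁻¹ * δ with hδ'def
    have hδeq : δ = (δ.cycleOf i) * δ' := by rw [hδ'def]; group
    have hin : ∀ y ∈ C, δ' y = y := by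
      intro y hy
      have hsc : δ.SameCycle i y := (hmemC y).mp hy
      show (δ.cycleOf i)⁻¹ (δ y) = y
      have : (δ.cycleOf i) y = δ y := Equiv.Perm.SameCycle.cycleOf_apply hsc
      rw [← this]; exact (δ.cycleOf i).symm_apply_apply y
    have hout : ∀ y ∉ C, δ' y = δ y := by
      intro y hy
      have hsc : ¬ δ.SameCycle i y := fun h => hy ((hmemC y).mpr h)
      have hscd : ¬ δ.SameCycle i (δ y) := fun h =>
        hsc (Equiv.Perm.sameCycle_apply_right.mp h)
      show (δ.cycleOf i)⁻¹ (δ y) = δ y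
      rw [Equiv.Perm.inv_eq_iff_eq]
      exact (Equiv.Perm.cycleOf_apply_of_not_sameCycle hscd).symm
    -- support of δ' is strictly smaller
    have hsupp' : δ'.support ⊆ δ.support := by
      intro y hy
      have hyC : y ∉ C := fun hmem => (Equiv.Perm.mem_support.mp hy) (hin y hmem)
      exact Equiv.Perm.mem_support.mpr
        (by rw [← hout y hyC]; exact Equiv.Perm.mem_support.mp hy)
    have hiC : i ∈ C := (hmemC i).mpr (Equiv.Perm.SameCycle.refl δ i)
    have hi' : i ∉ δ'.support := fun hmem => Equiv.Perm.mem_support.mp hmem (hin i hiC)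
    have hcard' : δ'.support.card ≤ N := by
      have hss : δ'.support ⊂ δ.support := ⟨hsupp', fun hsub => hi' (hsub hiS)⟩
      have := Finset.card_lt_card hss
      omega
    -- δ' inherits the cycle hypothesis
    have h2' : ∀ (r' : ℕ) (x' : Fin r' → Fin k), 2 ≤ r' → Function.Injective x' →
        (∀ j, x' (finRotate r' j) = δ' (x' j)) →
        ∏ j, g (x' j) (x' (finRotate r' j)) = (-1 : ℝ) ^ (r' + 1) := by
      intro r' x' hr' hx' hrot'
      have hfix : ∀ j, δ' (x' j) = δ (x' j) := by
        intro j
        have hne : δ' (x' j) ≠ x' j := by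
          rw [← hrot' j]
          exact fun hh => finRotate_ne hr' j (hx' hh)
        have hnC : x' j ∉ C := fun hmem => hne (hin _ hmem)
        exact hout _ hnC
      exact h2 r' x' hr' hx' (fun j => (hrot' j).trans (hfix j))
    have hIH := IH δ' g hcard' h1 h2'
    -- split the product over C and its complement
    have hsplit1 : (∏ y ∈ C, g y (δ y)) * (∏ y ∈ Cᶜ, g y (δ y)) = ∏ y, g y (δ y) :=
      Finset.prod_mul_prod_compl C _
    have hsplit2 : (∏ y ∈ C, g y (δ' y)) * (∏ y ∈ Cᶜ, g y (δ' y)) = ∏ y, g y (δ' y) :=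
      Finset.prod_mul_prod_compl C _
    have hCone : ∏ y ∈ C, g y (δ' y) = 1 :=
      Finset.prod_eq_one (fun y hy => by rw [hin y hy]; exact h1 y)
    have hCCeq : ∏ y ∈ Cᶜ, g y (δ y) = ∏ y ∈ Cᶜ, g y (δ' y) :=
      Finset.prod_congr rfl (fun y hy => by rw [hout y (Finset.mem_compl.mp hy)])
    have hCprod : ∏ y ∈ C, g y (δ y) = (-1 : ℝ) ^ (r + 1) := by
      rw [hC, Finset.prod_image (fun a _ b _ hab => hxinj hab)]
      rw [← h2 r x hr2 hxinj hxrot]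
      exact Finset.prod_congr rfl (fun j _ => by rw [hxrot j])
    -- sign computation
    have hsign : Equiv.Perm.sign δ = (-(-1) ^ r) * Equiv.Perm.sign δ' := by
      rw [hδeq, map_mul, hcyc.sign, hcardC]
    have hfin : ∏ y, g y (δ y) = (-1 : ℝ) ^ (r + 1) * ((Equiv.Perm.sign δ' : ℤ) : ℝ) := by
      rw [← hsplit1, hCprod, hCCeq, ← hIH, ← hsplit2, hCone, one_mul]
    rw [hfin, hsign]
    push_cast
    ring

lemma key {k : ℕ} (M : Matrix (Fin k) (Fin k) ℝ)
    (hM : ∀ (r : ℕ) (y x : Fin r → Fin k), 2 ≤ r → Function.Injective y →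
      Function.Injective x → (∀ j, M (y j) (x j) ≠ 0) →
      (∀ j, M (y j) (x (finRotate r j)) ≠ 0) →
      ∏ j, Real.sign (M (y j) (x j)) * Real.sign (M (y j) (x (finRotate r j)))
        = (-1 : ℝ) ^ (r + 1))
    (σ τ : Equiv.Perm (Fin k)) (hσ : ∀ i, M (σ i) i ≠ 0) (hτ : ∀ i, M (τ i) i ≠ 0) :
    ((Equiv.Perm.sign σ : ℤ) : ℝ) * ∏ i, Real.sign (M (σ i) i)
      = ((Equiv.Perm.sign τ : ℤ) : ℝ) * ∏ i, Real.sign (M (τ i) i) := by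
  set δ : Equiv.Perm (Fin k) := τ⁻¹ * σ with hδdef
  have hτδ : ∀ j, τ (δ j) = σ j := fun j => by
    show τ (τ⁻¹ (σ j)) = σ j
    exact τ.apply_symm_apply (σ j)
  set g : Fin k → Fin k → ℝ :=
    fun j j' => Real.sign (M (σ j) j) * Real.sign (M (σ j) j') with hgdef
  have h1 : ∀ i, g i i = 1 := fun i => sign_sq (hσ i)
  have h2 : ∀ (r : ℕ) (x : Fin r → Fin k), 2 ≤ r → Function.Injective x →
      (∀ j, x (finRotate r j) = δ (x j)) →
      ∏ j, g (x j) (x (finRotate r j)) = (-1 : ℝ) ^ (r + 1) := by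
    intro r x hr hx hrot
    refine hM r (σ ∘ x) x hr (σ.injective.comp hx) hx (fun j => hσ (x j)) ?_
    intro j
    show M (σ (x j)) (x (finRotate r j)) ≠ 0
    rw [hrot j, ← hτδ (x j)]
    exact hτ (δ (x j))
  have hB := lemB (Fintype.card (Fin k)) δ g (Finset.card_le_univ _) h1 h2
  -- compute the left side of hB
  have hre : ∏ i, Real.sign (M (τ (δ i)) (δ i)) = ∏ i, Real.sign (M (τ i) i) :=
    Equiv.prod_comp δ (fun i => Real.sign (M (τ i) i))
  have hL : ∏ i, g i (δ i)
      = (∏ i, Real.sign (M (σ i) i)) * ∏ i, Real.sign (M (τ i) i) := by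
    rw [Finset.prod_mul_distrib, ← hre]
    refine congrArg _ (Finset.prod_congr rfl (fun i _ => ?_))
    rw [hτδ i]
  have hsgn : ((Equiv.Perm.sign δ : ℤ) : ℝ)
      = ((Equiv.Perm.sign τ : ℤ) : ℝ) * ((Equiv.Perm.sign σ : ℤ) : ℝ) := by
    rw [hδdef, map_mul, Equiv.Perm.sign_inv]
    push_cast
    ring
  set A := ∏ i, Real.sign (M (σ i) i) with hA
  set B := ∏ i, Real.sign (M (τ i) i) with hBdef
  set s := ((Equiv.Perm.sign σ : ℤ) : ℝ) with hs
  set t := ((Equiv.Perm.sign τ : ℤ) : ℝ) with ht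
  have hAB : A * B = t * s := by rw [← hL, ← hsgn]; exact hB
  have hB2 : B * B = 1 := by
    rw [hBdef, ← Finset.prod_mul_distrib]
    exact Finset.prod_eq_one (fun i _ => sign_sq (hτ i))
  have hs2 : s * s = 1 := by
    rw [hs, ← Int.cast_mul, ← Units.val_mul, Int.units_mul_self]
    norm_num
  linear_combination (s * B) * hAB - (s * A) * hB2 + (t * B) * hs2

end OCycAux


open SRGraph in
/-- If every cycle of the SR graph `G(S)` is an o-cycle (has parity `-1`), then every
square submatrix of `S`, given by injective row and column selections, has signed
determinant: it is sign nonsingular or sign singular. -/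
theorem signedDet_of_all_o_cycles {n m : ℕ} (S : Matrix (Fin n) (Fin m) ℝ)
    (h : ∀ (r : ℕ) (a : Fin r → Fin n) (b : Fin r → Fin m),
      IsCyc S a b → parity S a b = -1) :
    ∀ (k : ℕ) (ρ : Fin k → Fin n) (c : Fin k → Fin m),
      Function.Injective ρ → Function.Injective c →
      SignNonsingular (S.submatrix ρ c) ∨ SignSingular (S.submatrix ρ c) := by
  intro k ρ c hρ hc
  set M : Matrix (Fin k) (Fin k) ℝ := S.submatrix ρ c with hMdef
  have hM : ∀ (r : ℕ) (y x : Fin r → Fin k), 2 ≤ r → Function.Injective y →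
      Function.Injective x → (∀ j, M (y j) (x j) ≠ 0) →
      (∀ j, M (y j) (x (finRotate r j)) ≠ 0) →
      ∏ j, Real.sign (M (y j) (x j)) * Real.sign (M (y j) (x (finRotate r j)))
        = (-1 : ℝ) ^ (r + 1) := by
    intro r y x hr hy hx hd1 hd2
    have hcyc : IsCyc S (ρ ∘ y) (c ∘ x) :=
      ⟨hr, hρ.comp hy, hc.comp hx, fun j => hd1 j, fun j => hd2 j⟩
    have hpar := h r (ρ ∘ y) (c ∘ x) hcyc
    unfold parity at hpar
    have hentry : ∏ j : Fin r, Real.sign (S ((ρ ∘ y) j) ((c ∘ x) j)) *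
          Real.sign (S ((ρ ∘ y) j) ((c ∘ x) (finRotate r j)))
        = ∏ j, Real.sign (M (y j) (x j)) * Real.sign (M (y j) (x (finRotate r j))) := rfl
    rw [hentry] at hpar
    rcases neg_one_pow_eq_or ℝ r with hp | hp <;>
      rw [pow_succ] <;> rw [hp] at hpar ⊢ <;> linarith
  by_cases hex : ∃ σ : Equiv.Perm (Fin k), ∏ i, M (σ i) i ≠ 0
  · left
    obtain ⟨σ₀, hσ₀⟩ := hex
    have hσ₀' : ∀ i, M (σ₀ i) i ≠ 0 := fun i hz =>
      hσ₀ (Finset.prod_eq_zero (Finset.mem_univ i) hz)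
    intro B hBpat
    set ε : ℝ := ((Equiv.Perm.sign σ₀ : ℤ) : ℝ) * ∏ i, Real.sign (M (σ₀ i) i) with hε
    have hcalcσ : ∀ σ : Equiv.Perm (Fin k), (∀ i, M (σ i) i ≠ 0) →
        ε * (((Equiv.Perm.sign σ : ℤ) : ℝ) * ∏ i, B (σ i) i)
          = ∏ i, Real.sign (B (σ i) i) * B (σ i) i := by
      intro σ hσ'
      have hk := OCycAux.key M hM σ σ₀ hσ' hσ₀'
      have hs2 : ((Equiv.Perm.sign σ : ℤ) : ℝ) * ((Equiv.Perm.sign σ : ℤ) : ℝ) = 1 := by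
        rw [← Int.cast_mul, ← Units.val_mul, Int.units_mul_self]
        norm_num
      have hεs : ε * ((Equiv.Perm.sign σ : ℤ) : ℝ) = ∏ i, Real.sign (M (σ i) i) := by
        rw [hε, ← hk]
        linear_combination (∏ i, Real.sign (M (σ i) i)) * hs2
      calc ε * (((Equiv.Perm.sign σ : ℤ) : ℝ) * ∏ i, B (σ i) i)
          = (ε * ((Equiv.Perm.sign σ : ℤ) : ℝ)) * ∏ i, B (σ i) i := by ring
        _ = (∏ i, Real.sign (M (σ i) i)) * ∏ i, B (σ i) i := by rw [hεs]
        _ = (∏ i, Real.sign (B (σ i) i)) * ∏ i, B (σ i) i := by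
            rw [Finset.prod_congr rfl (fun i _ => (hBpat (σ i) i).symm)]
        _ = ∏ i, Real.sign (B (σ i) i) * B (σ i) i := (Finset.prod_mul_distrib).symm
    have hterm : ∀ σ : Equiv.Perm (Fin k),
        0 ≤ ε * (((Equiv.Perm.sign σ : ℤ) : ℝ) * ∏ i, B (σ i) i) := by
      intro σ
      by_cases hσ : ∏ i, M (σ i) i = 0
      · obtain ⟨i0, -, hz⟩ := Finset.prod_eq_zero_iff.mp hσ
        have hB0 : B (σ i0) i0 = 0 := Real.sign_eq_zero_iff.mp
          (by rw [hBpat (σ i0) i0, hz, Real.sign_zero])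
        rw [Finset.prod_eq_zero (f := fun i => B (σ i) i) (Finset.mem_univ i0) hB0, mul_zero, mul_zero]
      · have hσ' : ∀ i, M (σ i) i ≠ 0 := fun i hz =>
          hσ (Finset.prod_eq_zero (Finset.mem_univ i) hz)
        rw [hcalcσ σ hσ']
        exact Finset.prod_nonneg (fun i _ => Real.sign_mul_nonneg _)
    have hBne : ∀ i, B (σ₀ i) i ≠ 0 := by
      intro i hz
      apply hσ₀' i
      apply Real.sign_eq_zero_iff.mp
      rw [← hBpat (σ₀ i) i, hz, Real.sign_zero]
    have hpos : 0 < ε * (((Equiv.Perm.sign σ₀ : ℤ) : ℝ) * ∏ i, B (σ₀ i) i) := by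
      rw [hcalcσ σ₀ hσ₀']
      exact Finset.prod_pos (fun i _ => Real.sign_mul_pos_of_ne_zero _ (hBne i))
    intro hdet
    have hsum : 0 < ε * ∑ σ : Equiv.Perm (Fin k),
        ((Equiv.Perm.sign σ : ℤ) : ℝ) * ∏ i, B (σ i) i := by
      rw [Finset.mul_sum]
      exact Finset.sum_pos' (fun σ _ => hterm σ) ⟨σ₀, Finset.mem_univ _, hpos⟩
    rw [← Matrix.det_apply', hdet, mul_zero] at hsum
    exact lt_irrefl 0 hsum
  · right
    intro B hBpat
    rw [Matrix.det_apply']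
    push_neg at hex
    refine Finset.sum_eq_zero (fun σ _ => ?_)
    obtain ⟨i0, -, hz⟩ := Finset.prod_eq_zero_iff.mp (hex σ)
    have hB0 : B (σ i0) i0 = 0 := Real.sign_eq_zero_iff.mp
      (by rw [hBpat (σ i0) i0, hz, Real.sign_zero])
    rw [Finset.prod_eq_zero (f := fun i => B (σ i) i) (Finset.mem_univ i0) hB0, mul_zero]
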